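/- Let μ be a measure with hdμ = dμ₀, let {R_n} be the monic orthogonal polynomials for μ and {P_n} the monic orthogonal polynomials for μ₀, where h is monic of degree N. Then h(t) P_n(t) = Σ_{k=n}^{n+N} b_k^{[n]} R_k(t), i.e., the expansion coefficients of h·P_n in the basis {R_k} vanish for indices k < n. -/

import Mathlib

open Polynomial MeasureTheory

/-- Any polynomial of natDegree ≤ m is a linear combination of a monic graded family. -/
lemma span_monic_family (R : ℕ → Polynomial ℝ) (hRmonic : ∀ n, (R n).Monic)
    (hRdeg : ∀ n, (R n).natDegree = n) :
    ∀ m : ℕ, ∀ q : Polynomial ℝ, q.natDegree ≤ m →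
      ∃ c : ℕ → ℝ, q = ∑ k ∈ Finset.range (m + 1), C (c k) * R k := by
  intro m
  induction m with
  | zero =>
    intro q hq
    have hR0 : R 0 = 1 := by
      have h1 := hRmonic 0
      have h2 := hRdeg 0
      have := Polynomial.eq_C_of_natDegree_le_zero (le_of_eq h2)
      rw [this]
      have : (R 0).coeff 0 = 1 := by
        have := h1.coeff_natDegree
        rwa [h2] at this
      rw [this, map_one]
    refine ⟨fun _ => q.coeff 0, ?_⟩
    rw [Finset.sum_range_one, hR0, mul_one]
    exact Polynomial.eq_C_of_natDegree_le_zero hq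
  | succ m ih =>
    intro q hq
    set a := q.coeff (m + 1) with ha
    set q' := q - C a * R (m + 1) with hq'
    have hq'deg : q'.natDegree ≤ m := by
      rw [Polynomial.natDegree_le_iff_coeff_eq_zero]
      intro i hi
      rw [hq', Polynomial.coeff_sub, Polynomial.coeff_C_mul]
      rcases eq_or_lt_of_le (Nat.succ_le_of_lt hi) with h1 | h1
      · have : (R (m + 1)).coeff i = 1 := by
          rw [← h1]
          have := (hRmonic (m + 1)).coeff_natDegree
          rwa [hRdeg (m + 1)] at this
        rw [this, mul_one, ← h1, ← ha, sub_self]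
      · have h2 : q.coeff i = 0 :=
          Polynomial.coeff_eq_zero_of_natDegree_lt (lt_of_le_of_lt hq h1)
        have h3 : (R (m + 1)).coeff i = 0 :=
          Polynomial.coeff_eq_zero_of_natDegree_lt (by rw [hRdeg]; exact h1)
        rw [h2, h3, mul_zero, sub_self]
    obtain ⟨c, hc⟩ := ih q' hq'deg
    refine ⟨fun k => if k = m + 1 then a else c k, ?_⟩
    rw [Finset.sum_range_succ]
    have hsum : ∑ k ∈ Finset.range (m + 1),
        C (if k = m + 1 then a else c k) * R k
        = ∑ k ∈ Finset.range (m + 1), C (c k) * R k := by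
      apply Finset.sum_congr rfl
      intro k hk
      have hk' := Finset.mem_range.mp hk
      rw [if_neg (by omega)]
    rw [hsum]
    show q = (∑ k ∈ Finset.range (m + 1), C (c k) * R k) + C (if m + 1 = m + 1 then a else c (m + 1)) * R (m + 1)
    rw [if_pos rfl, ← hc, hq']
    ring

theorem hPn_expansion_in_R (N : ℕ) (hN : 1 ≤ N)
    (h : Polynomial ℝ) (hmonic : h.Monic) (hdeg : h.natDegree = N)
    (μ : Measure ℝ) (hint : ∀ f : Polynomial ℝ, Integrable (fun t => f.eval t) μ)
    (R P : ℕ → Polynomial ℝ)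
    (hRmonic : ∀ n, (R n).Monic) (hRdeg : ∀ n, (R n).natDegree = n)
    (hRorth : ∀ n : ℕ, ∀ q : Polynomial ℝ, q.degree < n →
      ∫ t, (R n).eval t * q.eval t ∂μ = 0)
    (hRpos : ∀ n, 0 < ∫ t, (R n).eval t ^ 2 ∂μ)
    (hPmonic : ∀ n, (P n).Monic) (hPdeg : ∀ n, (P n).natDegree = n)
    (hPorth : ∀ n : ℕ, ∀ q : Polynomial ℝ, q.degree < n →
      ∫ t, (P n).eval t * q.eval t * h.eval t ∂μ = 0)
    (hPpos : ∀ n, 0 < ∫ t, (P n).eval t ^ 2 * h.eval t ∂μ) :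
    ∀ n, ∃ b : ℕ → ℝ,
      h * P n = ∑ k ∈ Finset.Icc n (n + N), C (b k) * R k := by
  intro n
  -- degree of each R k as `degree`
  have hRdegree : ∀ k : ℕ, (R k).degree = (k : WithBot ℕ) := by
    intro k
    rw [Polynomial.degree_eq_natDegree (hRmonic k).ne_zero, hRdeg k]
  -- orthogonality of distinct R's
  have hRR : ∀ j k : ℕ, j ≠ k → ∫ t, (R j * R k).eval t ∂μ = 0 := by
    intro j k hjk
    rcases lt_or_gt_of_ne hjk with hlt | hlt
    · have := hRorth k (R j) (by rw [hRdegree]; exact_mod_cast hlt)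
      have heq : (fun t => (R j * R k).eval t) = fun t => (R k).eval t * (R j).eval t := by
        funext t; simp [mul_comm]
      rw [heq]; exact this
    · have := hRorth j (R k) (by rw [hRdegree]; exact_mod_cast hlt)
      have heq : (fun t => (R j * R k).eval t) = fun t => (R j).eval t * (R k).eval t := by
        funext t; simp
      rw [heq]; exact this
  -- expand h * P n in the basis
  have hdegq : (h * P n).natDegree ≤ n + N := by
    rw [Polynomial.Monic.natDegree_mul hmonic (hPmonic n), hdeg, hPdeg]
    omega
  obtain ⟨c, hc⟩ := span_monic_family R hRmonic hRdeg (n + N) (h * P n) hdegq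
  -- coefficients below n vanish
  have key : ∀ k, k < n → c k = 0 := by
    intro k hk
    have h0 : ∫ t, (P n).eval t * (R k).eval t * h.eval t ∂μ = 0 :=
      hPorth n (R k) (by rw [hRdegree]; exact_mod_cast hk)
    have hI : ∫ t, ((h * P n) * R k).eval t ∂μ = 0 := by
      have heq : (fun t => ((h * P n) * R k).eval t)
          = fun t => (P n).eval t * (R k).eval t * h.eval t := by
        funext t; simp [eval_mul]; ring
      rw [heq]; exact h0
    have hexp : (h * P n) * R k
        = ∑ j ∈ Finset.range (n + N + 1), (C (c j) * R j * R k) := by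
      rw [hc, Finset.sum_mul]
    have hI2 : ∫ t, ((h * P n) * R k).eval t ∂μ
        = ∑ j ∈ Finset.range (n + N + 1), ∫ t, (C (c j) * R j * R k).eval t ∂μ := by
      rw [hexp]
      have heq : (fun t => (∑ j ∈ Finset.range (n + N + 1),
          (C (c j) * R j * R k)).eval t)
          = fun t => ∑ j ∈ Finset.range (n + N + 1), (C (c j) * R j * R k).eval t := by
        funext t; rw [Polynomial.eval_finset_sum]
      rw [heq]
      exact integral_finset_sum _ (fun j _ => hint _)
    have hterm : ∀ j, (fun t => (C (c j) * R j * R k).eval t)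
        = fun t => c j * (R j * R k).eval t := by
      intro j; funext t; simp [eval_mul]; ring
    have hsum : ∑ j ∈ Finset.range (n + N + 1), ∫ t, (C (c j) * R j * R k).eval t ∂μ
        = c k * ∫ t, (R k * R k).eval t ∂μ := by
      rw [Finset.sum_eq_single k]
      · rw [hterm k, integral_const_mul]
      · intro j _ hj
        rw [hterm j, integral_const_mul, hRR j k hj, mul_zero]
      · intro hknot
        exact absurd (Finset.mem_range.mpr (by omega)) hknot
    have hpos : 0 < ∫ t, (R k * R k).eval t ∂μ := by
      have heq : (fun t => (R k * R k).eval t) = fun t => (R k).eval t ^ 2 := by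
        funext t; simp [eval_mul]; ring
      rw [heq]; exact hRpos k
    have : c k * ∫ t, (R k * R k).eval t ∂μ = 0 := by
      rw [← hsum, ← hI2, hI]
    exact (mul_eq_zero.mp this).resolve_right (ne_of_gt hpos)
  -- restrict the sum to Icc n (n + N)
  refine ⟨c, ?_⟩
  rw [hc]
  symm
  apply Finset.sum_subset
  · intro x hx
    rw [Finset.mem_Icc] at hx
    rw [Finset.mem_range]
    omega
  · intro x hx1 hx2
    rw [Finset.mem_range] at hx1
    rw [Finset.mem_Icc] at hx2
    have : c x = 0 := key x (by omega)
    rw [this, map_zero, zero_mul]
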